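/- There is a constant C > 0 such that the following holds for all n and all G ≥ 1. Let the processing times p_1,…,p_n ∈ {1,…,n} be fixed integers such that every set of G consecutive values contained in {1,…,n} contains the processing time of at least one job (i.e., there is no interval of G consecutive values in {1,…,n} avoided by all p_i). Then, from any initial solution, the expected number of iterations of the (1+1) EA until the current solution x satisfies d(x) ≤ G is at most C · n⁴. -/

import Mathlib

open scoped BigOperators ENNReal

namespace MakespanDyn

/-- Load of machine `b` (machine `M₁` corresponds to `b = false`, `M₂` to `b = true`). -/
def load {n : ℕ} (p : Fin n → ℝ) (x : Fin n → Bool) (b : Bool) : ℝ :=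
  ∑ i, if x i = b then p i else 0

/-- The makespan of the solution `x` under processing times `p`. -/
def mspan {n : ℕ} (p : Fin n → ℝ) (x : Fin n → Bool) : ℝ :=
  max (load p x false) (load p x true)

/-- The discrepancy of the solution `x` under processing times `p`. -/
def disc {n : ℕ} (p : Fin n → ℝ) (x : Fin n → Bool) : ℝ :=
  |load p x false - load p x true|

/-- Flip bit `i` of `x`. -/
def flip {n : ℕ} (x : Fin n → Bool) (i : Fin n) : Fin n → Bool :=
  Function.update x i (!(x i))

/-- One iteration of RLS with processing times `p`: flip one uniformly random bit
and accept iff the makespan does not increase. -/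
noncomputable def rlsStep {n : ℕ} (hn : 0 < n) (p : Fin n → ℝ) (x : Fin n → Bool) :
    PMF (Fin n → Bool) :=
  haveI : Nonempty (Fin n) := Fin.pos_iff_nonempty.mp hn
  (PMF.uniformOfFintype (Fin n)).map fun i =>
    if mspan p (flip x i) ≤ mspan p x then flip x i else x

/-- The distribution of the mutation mask of the (1+1) EA: every bit is set
independently with probability `1/n`. -/
noncomputable def maskPMF (n : ℕ) (hn : 0 < n) : PMF (Fin n → Bool) :=
  ⟨fun m => ∏ i, (if m i then (n : ℝ≥0∞)⁻¹ else 1 - (n : ℝ≥0∞)⁻¹), by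
    classical
    have hinv : (n : ℝ≥0∞)⁻¹ ≤ 1 := ENNReal.inv_le_one.mpr (by exact_mod_cast hn)
    have hsum :
        ∑ m : Fin n → Bool, ∏ i, (if m i then (n : ℝ≥0∞)⁻¹ else 1 - (n : ℝ≥0∞)⁻¹) = 1 := by
      rw [← Fintype.piFinset_univ, ← Finset.prod_univ_sum
        (fun _ : Fin n => (Finset.univ : Finset Bool))
        (fun _ b => if b then (n : ℝ≥0∞)⁻¹ else 1 - (n : ℝ≥0∞)⁻¹)]
      have key : (n : ℝ≥0∞)⁻¹ + (1 - (n : ℝ≥0∞)⁻¹) = 1 := add_tsub_cancel_of_le hinv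
      simp [key]
    have := hasSum_fintype
      (fun m : Fin n → Bool => ∏ i, (if m i then (n : ℝ≥0∞)⁻¹ else 1 - (n : ℝ≥0∞)⁻¹))
    rwa [hsum] at this⟩

/-- One iteration of the (1+1) EA with processing times `p`: flip every bit
independently with probability `1/n` and accept iff the makespan does not increase. -/
noncomputable def eaStep {n : ℕ} (hn : 0 < n) (p : Fin n → ℝ) (x : Fin n → Bool) :
    PMF (Fin n → Bool) :=
  (maskPMF n hn).map fun m =>
    let y : Fin n → Bool := fun i => xor (m i) (x i)
    if mspan p y ≤ mspan p x then y else x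

/-- A configuration: a solution together with the current processing times. -/
abbrev Cfg (n : ℕ) := (Fin n → Bool) × (Fin n → ℝ)

/-- The run of an algorithm given by `step` with an adversary `adv`, which may
change the processing times (as an arbitrary function of the history) before each
iteration.  `run step adv init t` is the distribution of the history (most recent
configuration first) after `t` iterations. -/
noncomputable def run {n : ℕ} (step : (Fin n → ℝ) → (Fin n → Bool) → PMF (Fin n → Bool))
    (adv : List (Cfg n) → (Fin n → ℝ)) (init : Cfg n) : ℕ → PMF (List (Cfg n))
  | 0 => PMF.pure [init]
  | t + 1 =>
      (run step adv init t).bind fun h =>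
        (step (adv h) h.headI.1).map fun x' => (x', adv h) :: h

/-- The expected number of iterations until a configuration satisfying `good` occurs,
computed as `∑_{t ≥ 0} Pr(T > t)` where `T > t` iff no configuration in the history
after `t` iterations is good. -/
noncomputable def expectedHittingTime {σ : Type*} (runs : ℕ → PMF (List σ))
    (good : σ → Prop) : ℝ≥0∞ :=
  ∑' t, (runs t).toOuterMeasure {h | ∀ c ∈ h, ¬ good c}


/-! ### Auxiliary material for the proof -/

section Aux

variable {n : ℕ}

private lemma load_add (pr : Fin n → ℝ) (x : Fin n → Bool) :
    load pr x false + load pr x true = ∑ i, pr i := by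
  unfold load
  rw [← Finset.sum_add_distrib]
  refine Finset.sum_congr rfl fun i _ => ?_
  cases hx : x i <;> simp

private lemma disc_eq_mspan (pr : Fin n → ℝ) (x : Fin n → Bool) :
    disc pr x = 2 * mspan pr x - ∑ i, pr i := by
  have h1 := max_sub_min_eq_abs (load pr x false) (load pr x true)
  have h2 := min_add_max (load pr x false) (load pr x true)
  have h3 := load_add pr x
  unfold disc mspan
  rw [← h3]
  rw [abs_sub_comm]
  linarith

private lemma load_mask (pr : Fin n → ℝ) (x : Fin n → Bool) (T : Finset (Fin n)) (b : Bool) :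
    load pr (fun i => xor (decide (i ∈ T)) (x i)) b
      = (∑ i ∈ T, if !(x i) = b then pr i else 0)
        + (load pr x b - ∑ i ∈ T, if x i = b then pr i else 0) := by
  classical
  have hx : load pr x b
      = (∑ i ∈ T, if x i = b then pr i else 0) + ∑ i ∈ Tᶜ, if x i = b then pr i else 0 :=
    (Finset.sum_add_sum_compl T _).symm
  have hy : load pr (fun i => xor (decide (i ∈ T)) (x i)) b
      = (∑ i ∈ T, if !(x i) = b then pr i else 0)
        + ∑ i ∈ Tᶜ, if x i = b then pr i else 0 := by
    unfold load
    rw [← Finset.sum_add_sum_compl T]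
    congr 1
    · refine Finset.sum_congr rfl fun i hi => ?_
      cases hxi : x i <;> cases b <;> simp [hi, hxi]
    · refine Finset.sum_congr rfl fun i hi => ?_
      rw [Finset.mem_compl] at hi
      simp [hi]
  rw [hy]
  linarith

private lemma cast_load (p : Fin n → ℕ) (x : Fin n → Bool) (b : Bool) :
    load (fun i => (p i : ℝ)) x b = ((∑ i, if x i = b then p i else 0 : ℕ) : ℝ) := by
  unfold load
  rw [Nat.cast_sum]
  refine Finset.sum_congr rfl fun i _ => ?_
  split <;> simp

/-- The success probability of a single step. -/
noncomputable def rho (n : ℕ) : ℝ≥0∞ :=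
  ((n : ℝ≥0∞)⁻¹) ^ 2 * (1 - (n : ℝ≥0∞)⁻¹) ^ (n - 1)

private lemma maskPMF_apply (hn : 0 < n) (m : Fin n → Bool) :
    maskPMF n hn m = ∏ i, (if m i then (n : ℝ≥0∞)⁻¹ else 1 - (n : ℝ≥0∞)⁻¹) := rfl

private lemma maskPMF_indicator (hn : 0 < n) (T : Finset (Fin n)) :
    maskPMF n hn (fun i => decide (i ∈ T))
      = ((n : ℝ≥0∞)⁻¹) ^ T.card * (1 - (n : ℝ≥0∞)⁻¹) ^ (n - T.card) := by
  classical
  rw [maskPMF_apply, ← Finset.prod_mul_prod_compl T]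
  congr 1
  · rw [Finset.prod_congr rfl (fun i hi => by simp [hi] :
      ∀ i ∈ T, (if (decide (i ∈ T) : Bool) then (n : ℝ≥0∞)⁻¹ else 1 - (n : ℝ≥0∞)⁻¹)
        = (n : ℝ≥0∞)⁻¹), Finset.prod_const]
  · rw [Finset.prod_congr rfl (fun i hi => by simp [Finset.mem_compl.mp hi] :
      ∀ i ∈ Tᶜ, (if (decide (i ∈ T) : Bool) then (n : ℝ≥0∞)⁻¹ else 1 - (n : ℝ≥0∞)⁻¹)
        = 1 - (n : ℝ≥0∞)⁻¹), Finset.prod_const, Finset.card_compl]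
    simp

private lemma inv_n_le_one (hn : 0 < n) : (n : ℝ≥0∞)⁻¹ ≤ 1 :=
  ENNReal.inv_le_one.mpr (by exact_mod_cast hn)

private lemma rho_le_mask (hn : 0 < n) (T : Finset (Fin n)) (h1 : 1 ≤ T.card)
    (h2 : T.card ≤ 2) :
    rho n ≤ maskPMF n hn (fun i => decide (i ∈ T)) := by
  rw [maskPMF_indicator hn T]
  unfold rho
  refine mul_le_mul' ?_ ?_
  · exact pow_le_pow_right_of_le_one' (inv_n_le_one hn) h2
  · exact pow_le_pow_right_of_le_one' tsub_le_self (Nat.sub_le_sub_left h1 n)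

private lemma quarter_le_real (n : ℕ) (hn : 0 < n) :
    (1 / 4 : ℝ) ≤ (1 - 1 / (n : ℝ)) ^ (n - 1) := by
  obtain ⟨m, rfl⟩ : ∃ m, n = m + 1 := ⟨n - 1, by omega⟩
  rcases Nat.eq_zero_or_pos m with hm | hm
  · subst hm; norm_num
  · have hm' : (0 : ℝ) < m := by exact_mod_cast hm
    have h1 : (1 : ℝ) - 1 / (m + 1 : ℕ) = ((m : ℝ) / (m + 1)) := by
      push_cast
      field_simp
      ring
    rw [h1]
    have hexp : ((m + 1 : ℝ) / m) ^ m ≤ 4 := by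
      have hb : (m + 1 : ℝ) / m = 1 + 1 / m := by field_simp
      have h2 : (1 : ℝ) + 1 / m ≤ Real.exp (1 / m) := by
        have := Real.add_one_le_exp (1 / (m : ℝ)); linarith
      have h3 : ((1 : ℝ) + 1 / m) ^ m ≤ Real.exp (1 / m) ^ m :=
        pow_le_pow_left₀ (by positivity) h2 m
      have h4 : Real.exp (1 / (m : ℝ)) ^ m = Real.exp 1 := by
        rw [← Real.exp_nat_mul]
        congr 1
        field_simp
      have h5 : Real.exp 1 ≤ 4 := by
        have := Real.exp_one_lt_d9; linarith
      rw [hb]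
      calc ((1 : ℝ) + 1 / m) ^ m ≤ Real.exp (1 / m) ^ m := h3
        _ = Real.exp 1 := h4
        _ ≤ 4 := h5
    have hmono : ((m : ℝ) / (m + 1)) ^ m = (((m + 1 : ℝ) / m) ^ m)⁻¹ := by
      rw [← inv_pow]
      congr 1
      rw [inv_div]
    have hpos : (0 : ℝ) < ((m + 1 : ℝ) / m) ^ m := by positivity
    simp only [Nat.add_sub_cancel]
    rw [hmono, one_div]
    exact le_trans (by norm_num) (inv_anti₀ hpos hexp)

private lemma quarter_le (hn : 0 < n) :
    (4 : ℝ≥0∞)⁻¹ ≤ (1 - (n : ℝ≥0∞)⁻¹) ^ (n - 1) := by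
  have hnR : (0 : ℝ) < n := by exact_mod_cast hn
  have h1 : (n : ℝ≥0∞)⁻¹ = ENNReal.ofReal (1 / (n : ℝ)) := by
    rw [one_div, ENNReal.ofReal_inv_of_pos hnR, ENNReal.ofReal_natCast]
  have h2 : (1 : ℝ≥0∞) - (n : ℝ≥0∞)⁻¹ = ENNReal.ofReal (1 - 1 / (n : ℝ)) := by
    rw [h1, ENNReal.ofReal_sub 1 (by positivity), ENNReal.ofReal_one]
  have h3 : (0 : ℝ) ≤ 1 - 1 / (n : ℝ) := by
    have : 1 / (n : ℝ) ≤ 1 := by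
      rw [div_le_one hnR]; exact_mod_cast hn
    linarith
  rw [h2, ← ENNReal.ofReal_pow h3]
  have h4 : (4 : ℝ≥0∞)⁻¹ = ENNReal.ofReal (1 / 4) := by
    rw [one_div, ENNReal.ofReal_inv_of_pos (by norm_num)]
    norm_num
  rw [h4]
  exact ENNReal.ofReal_le_ofReal (quarter_le_real n hn)

private lemma rho_lower (hn : 0 < n) : (4 * (n : ℝ≥0∞) ^ 2)⁻¹ ≤ rho n := by
  have hne : ((n : ℝ≥0∞) ^ 2) ≠ ⊤ := by
    exact ENNReal.pow_ne_top (ENNReal.natCast_ne_top n)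
  rw [ENNReal.mul_inv (Or.inl (by norm_num)) (Or.inl (by norm_num))]
  unfold rho
  rw [mul_comm ((4 : ℝ≥0∞)⁻¹) _, ← ENNReal.inv_pow]
  exact mul_le_mul' le_rfl (quarter_le hn)

private lemma rho_ne_zero (hn : 0 < n) : rho n ≠ 0 := by
  intro h
  have := rho_lower hn
  rw [h, le_zero_iff, ENNReal.inv_eq_zero] at this
  exact (ENNReal.mul_ne_top (by norm_num) (ENNReal.pow_ne_top (ENNReal.natCast_ne_top n))) this

private lemma rho_ne_top (hn : 0 < n) : rho n ≠ ⊤ := by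
  have : rho n ≤ 1 := by
    unfold rho
    calc ((n : ℝ≥0∞)⁻¹) ^ 2 * (1 - (n : ℝ≥0∞)⁻¹) ^ (n - 1)
        ≤ 1 ^ 2 * 1 ^ (n - 1) :=
          mul_le_mul' (pow_le_pow_left' (inv_n_le_one hn) 2)
            (pow_le_pow_left' tsub_le_self (n - 1))
      _ = 1 := by simp
  exact ne_top_of_le_ne_top ENNReal.one_ne_top this

private lemma exists_move (G : ℕ) (hG : 1 ≤ G) (p : Fin n → ℕ)
    (hp1 : ∀ i, 1 ≤ p i) (hpn : ∀ i, p i ≤ n)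
    (hw : ∀ a : ℕ, 1 ≤ a → a + G ≤ n + 1 → ∃ j, a ≤ p j ∧ p j ≤ a + G - 1)
    (x : Fin n → Bool) (hbad : (G : ℝ) < disc (fun i => (p i : ℝ)) x) :
    ∃ T : Finset (Fin n), 1 ≤ T.card ∧ T.card ≤ 2 ∧
      mspan (fun i => (p i : ℝ)) (fun i => xor (decide (i ∈ T)) (x i))
        ≤ mspan (fun i => (p i : ℝ)) x ∧
      disc (fun i => (p i : ℝ)) (fun i => xor (decide (i ∈ T)) (x i))
        ≤ disc (fun i => (p i : ℝ)) x - 2 := by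
  classical
  set pr : Fin n → ℝ := fun i => (p i : ℝ) with hpr
  obtain ⟨b, hba⟩ : ∃ b : Bool, load pr x (!b) ≤ load pr x b := by
    rcases le_total (load pr x false) (load pr x true) with h | h
    · exact ⟨true, by simpa using h⟩
    · exact ⟨false, by simpa using h⟩
  have hmspan_x : mspan pr x = load pr x b := by
    unfold mspan
    cases b
    · simp only [Bool.not_false] at hba
      exact max_eq_left hba
    · simp only [Bool.not_true] at hba
      exact max_eq_right hba
  have hdisc_x : disc pr x = load pr x b - load pr x (!b) := by
    unfold disc
    cases b
    · simp only [Bool.not_false] at hba ⊢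
      exact abs_of_nonneg (by linarith)
    · simp only [Bool.not_true] at hba ⊢
      rw [abs_of_nonpos (by linarith)]
      ring
  set A : ℕ := ∑ i, if x i = b then p i else 0 with hA
  set B : ℕ := ∑ i, if x i = !b then p i else 0 with hB
  have hlA : load pr x b = (A : ℝ) := cast_load p x b
  have hlB : load pr x (!b) = (B : ℝ) := cast_load p x (!b)
  have hABgap : B + G + 1 ≤ A := by
    have h : (B : ℝ) + G < A := by
      rw [hdisc_x, hlA, hlB] at hbad
      linarith
    have h2 : B + G < A := by exact_mod_cast h
    omega
  -- the common concluding step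
  have main : ∀ T : Finset (Fin n), 1 ≤ T.card → T.card ≤ 2 →
      ∀ δ : ℝ, 1 ≤ δ → δ ≤ (A : ℝ) - B - 1 →
      load pr (fun i => xor (decide (i ∈ T)) (x i)) b = A - δ →
      load pr (fun i => xor (decide (i ∈ T)) (x i)) (!b) = B + δ →
      ∃ T : Finset (Fin n), 1 ≤ T.card ∧ T.card ≤ 2 ∧
        mspan pr (fun i => xor (decide (i ∈ T)) (x i)) ≤ mspan pr x ∧
        disc pr (fun i => xor (decide (i ∈ T)) (x i)) ≤ disc pr x - 2 := by
    intro T h1 h2 δ hδ1 hδ2 hyb hynb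
    set y : Fin n → Bool := fun i => xor (decide (i ∈ T)) (x i) with hy
    refine ⟨T, h1, h2, ?_, ?_⟩
    · rw [hmspan_x, hlA]
      have e1 : load pr y b ≤ (A : ℝ) := by rw [hyb]; linarith
      have e2 : load pr y (!b) ≤ (A : ℝ) := by rw [hynb]; linarith
      unfold mspan
      cases b
      · simp only [Bool.not_false] at e2
        exact max_le e1 e2
      · simp only [Bool.not_true] at e2
        exact max_le e2 e1
    · rw [hdisc_x, hlA, hlB]
      have habs : disc pr y = |(A : ℝ) - δ - (B + δ)| := by
        unfold disc
        cases b
        · simp only [Bool.not_false] at hynb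
          rw [hyb, hynb]
        · simp only [Bool.not_true] at hynb
          rw [hyb, hynb, abs_sub_comm]
      rw [habs]
      rw [abs_le]
      constructor <;> linarith
  by_cases hc : ∃ j, x j = b ∧ p j + B + 1 ≤ A
  · obtain ⟨j, hxj, hj⟩ := hc
    have hsum1 : (∑ i ∈ ({j} : Finset (Fin n)), if !(x i) = b then pr i else 0) = 0 := by
      rw [Finset.sum_singleton, hxj]
      simp
    have hsum2 : (∑ i ∈ ({j} : Finset (Fin n)), if x i = b then pr i else 0) = pr j := by
      rw [Finset.sum_singleton, hxj]
      simp
    have hsum3 : (∑ i ∈ ({j} : Finset (Fin n)), if !(x i) = !b then pr i else 0) = pr j := by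
      rw [Finset.sum_singleton, hxj]
      simp
    have hsum4 : (∑ i ∈ ({j} : Finset (Fin n)), if x i = !b then pr i else 0) = 0 := by
      rw [Finset.sum_singleton, hxj]
      cases b <;> simp
    refine main {j} (by simp) (by simp) (p j) (by exact_mod_cast hp1 j) ?_ ?_ ?_
    · have : (p j : ℝ) + B + 1 ≤ A := by exact_mod_cast hj
      linarith
    · rw [load_mask, hsum1, hsum2, hlA]; ring
    · rw [load_mask, hsum3, hsum4, hlB]; ring
  · push_neg at hc
    have hc' : ∀ j, x j = b → A ≤ p j + B := by
      intro j hj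
      have := hc j hj
      omega
    have hSne : ∃ i, x i = b := by
      by_contra hno
      push_neg at hno
      have : A = 0 := by
        rw [hA]
        exact Finset.sum_eq_zero fun i _ => by simp [hno i]
      omega
    obtain ⟨i₀, hi₀⟩ := hSne
    obtain ⟨j, hjS, hjmin⟩ :=
      Finset.exists_min_image (Finset.univ.filter fun i => x i = b) p
        ⟨i₀, Finset.mem_filter.mpr ⟨Finset.mem_univ _, hi₀⟩⟩
    have hxj : x j = b := (Finset.mem_filter.mp hjS).2
    have hj1 : A ≤ p j + B := hc' j hxj
    have hpjG : G + 1 ≤ p j := by omega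
    obtain ⟨k, hk1, hk2⟩ := hw (p j - G) (by omega) (by have := hpn j; omega)
    have hk1' : p j - G ≤ p k := hk1
    have hk2' : p k ≤ p j - 1 := by omega
    have hkj : p k < p j := by have := hp1 j; omega
    have hxk : x k ≠ b := by
      intro h
      have := hjmin k (Finset.mem_filter.mpr ⟨Finset.mem_univ _, h⟩)
      omega
    have hxk' : x k = !b := by
      cases hxkv : x k <;> cases hbv : b <;> simp_all
    have hjk : j ≠ k := by
      intro h
      rw [h] at hkj
      omega
    have hsum1 : (∑ i ∈ ({j, k} : Finset (Fin n)), if !(x i) = b then pr i else 0) = pr k := by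
      rw [Finset.sum_pair hjk, hxj, hxk']
      cases b <;> simp
    have hsum2 : (∑ i ∈ ({j, k} : Finset (Fin n)), if x i = b then pr i else 0) = pr j := by
      rw [Finset.sum_pair hjk, hxj, hxk']
      cases b <;> simp
    have hsum3 : (∑ i ∈ ({j, k} : Finset (Fin n)), if !(x i) = !b then pr i else 0) = pr j := by
      rw [Finset.sum_pair hjk, hxj, hxk']
      cases b <;> simp
    have hsum4 : (∑ i ∈ ({j, k} : Finset (Fin n)), if x i = !b then pr i else 0) = pr k := by
      rw [Finset.sum_pair hjk, hxj, hxk']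
      cases b <;> simp
    have hδ1 : (1 : ℝ) ≤ (p j : ℝ) - p k := by
      have : p k + 1 ≤ p j := by omega
      have h := (Nat.cast_le (α := ℝ)).mpr this
      push_cast at h
      linarith
    have hδ2 : (p j : ℝ) - p k ≤ (A : ℝ) - B - 1 := by
      have hjk2 : p j ≤ p k + G := by omega
      have h1 := (Nat.cast_le (α := ℝ)).mpr hjk2
      have h2 := (Nat.cast_le (α := ℝ)).mpr hABgap
      push_cast at h1 h2
      linarith
    refine main {j, k} (by rw [Finset.card_pair hjk]; omega)
      (by rw [Finset.card_pair hjk]) ((p j : ℝ) - p k) hδ1 hδ2 ?_ ?_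
    · rw [load_mask, hsum1, hsum2, hlA]; ring
    · rw [load_mask, hsum3, hsum4, hlB]; ring

/-- Potential function. -/
noncomputable def Phi (pr : Fin n → ℝ) (G : ℕ) (x : Fin n → Bool) : ℝ≥0∞ :=
  ENNReal.ofReal ((disc pr x - G) / 2 + 1)

open Classical in
/-- Potential, cut off at good states. -/
noncomputable def Psi (pr : Fin n → ℝ) (G : ℕ) (x : Fin n → Bool) : ℝ≥0∞ :=
  if disc pr x ≤ (G : ℝ) then 0 else Phi pr G x

open Classical in
/-- Indicator that the whole history is bad. -/
noncomputable def chi (G : ℕ) (h : List (Cfg n)) : ℝ≥0∞ :=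
  if ∀ c ∈ h, ¬ disc c.2 c.1 ≤ (G : ℝ) then 1 else 0

/-- History weight. -/
noncomputable def Wgt (pr : Fin n → ℝ) (G : ℕ) (h : List (Cfg n)) : ℝ≥0∞ :=
  chi G h * Phi pr G h.headI.1

private lemma Psi_le_Phi (pr : Fin n → ℝ) (G : ℕ) (x : Fin n → Bool) :
    Psi pr G x ≤ Phi pr G x := by
  unfold Psi
  split
  · exact zero_le
  · exact le_rfl

private lemma Phi_mono (pr : Fin n → ℝ) (G : ℕ) {x y : Fin n → Bool}
    (h : disc pr y ≤ disc pr x) : Phi pr G y ≤ Phi pr G x :=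
  ENNReal.ofReal_le_ofReal (by linarith)

private lemma chi_le_one (G : ℕ) (h : List (Cfg n)) : chi G h ≤ 1 := by
  unfold chi
  split
  · exact le_rfl
  · exact zero_le

private lemma Wgt_cons (pr : Fin n → ℝ) (G : ℕ) (z : Fin n → Bool) (h : List (Cfg n)) :
    Wgt pr G ((z, pr) :: h) = chi G h * Psi pr G z := by
  have hiff : (∀ c ∈ ((z, pr) :: h : List (Cfg n)), ¬ disc c.2 c.1 ≤ (G : ℝ)) ↔
      (¬ disc pr z ≤ (G : ℝ)) ∧ ∀ c ∈ h, ¬ disc c.2 c.1 ≤ (G : ℝ) := by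
    constructor
    · intro hc
      exact ⟨hc _ List.mem_cons_self, fun c hcm => hc c (List.mem_cons_of_mem _ hcm)⟩
    · rintro ⟨h1, h2⟩ c hc
      rcases List.mem_cons.mp hc with rfl | hc
      · exact h1
      · exact h2 c hc
  unfold Wgt chi Psi
  simp only [List.headI_cons]
  by_cases hz : disc pr z ≤ (G : ℝ) <;>
    by_cases hh : ∀ c ∈ h, ¬ disc c.2 c.1 ≤ (G : ℝ)
  · rw [if_neg (fun hc => (hiff.mp hc).1 hz), if_pos hh, if_pos hz] <;> simp
  · rw [if_neg (fun hc => hh (hiff.mp hc).2), if_neg hh, if_pos hz] <;> simp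
  · rw [if_pos (hiff.mpr ⟨hz, hh⟩), if_pos hh, if_neg hz] <;> simp
  · rw [if_neg (fun hc => hh (hiff.mp hc).2), if_neg hh, if_neg hz] <;> simp

private lemma E_bind {α β : Type*} (μ : PMF α) (κ : α → PMF β) (g : β → ℝ≥0∞) :
    ∑' b, (μ.bind κ) b * g b = ∑' a, μ a * ∑' b, (κ a) b * g b := by
  simp only [PMF.bind_apply]
  calc ∑' b, (∑' a, μ a * (κ a) b) * g b
      = ∑' b, ∑' a, μ a * (κ a) b * g b := by
        refine tsum_congr fun b => ?_
        rw [← ENNReal.tsum_mul_right]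
    _ = ∑' a, ∑' b, μ a * (κ a) b * g b := ENNReal.tsum_comm
    _ = ∑' a, μ a * ∑' b, (κ a) b * g b := by
        refine tsum_congr fun a => ?_
        rw [← ENNReal.tsum_mul_left]
        exact tsum_congr fun b => by ring

private lemma E_map {α β : Type*} (μ : PMF α) (f : α → β) (g : β → ℝ≥0∞) :
    ∑' b, (μ.map f) b * g b = ∑' a, μ a * g (f a) := by
  have hmf : μ.map f = μ.bind (fun a => PMF.pure (f a)) := rfl
  rw [hmf, E_bind]
  refine tsum_congr fun a => ?_
  congr 1
  rw [tsum_eq_single (f a) ?_]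
  · simp [PMF.pure_apply]
  · intro b hb
    simp [PMF.pure_apply, hb]

private lemma step_drift (hn : 0 < n) (G : ℕ) (hG : 1 ≤ G) (p : Fin n → ℕ)
    (hp1 : ∀ i, 1 ≤ p i) (hpn : ∀ i, p i ≤ n)
    (hw : ∀ a : ℕ, 1 ≤ a → a + G ≤ n + 1 → ∃ j, a ≤ p j ∧ p j ≤ a + G - 1)
    (x : Fin n → Bool) (hbad : ¬ disc (fun i => (p i : ℝ)) x ≤ (G : ℝ)) :
    (∑' z, eaStep hn (fun i => (p i : ℝ)) x z * Psi (fun i => (p i : ℝ)) G z) + rho n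
      ≤ Phi (fun i => (p i : ℝ)) G x := by
  classical
  set pr : Fin n → ℝ := fun i => (p i : ℝ) with hpr
  push_neg at hbad
  obtain ⟨T, hT1, hT2, hms, hd⟩ := exists_move G hG p hp1 hpn hw x hbad
  set m₀ : Fin n → Bool := fun i => decide (i ∈ T) with hm₀
  set f : (Fin n → Bool) → (Fin n → Bool) := fun m =>
    (let y : Fin n → Bool := fun i => xor (m i) (x i);
     if mspan pr y ≤ mspan pr x then y else x) with hf
  have hstep : eaStep hn pr x = (maskPMF n hn).map f := rfl
  rw [hstep, E_map]
  have hfm0 : f m₀ = fun i => xor (decide (i ∈ T)) (x i) := by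
    simp only [hf]
    exact if_pos hms
  have hSfix : ∀ z : Fin n → Bool, mspan pr z ≤ mspan pr x → disc pr z ≤ disc pr x := by
    intro z hz
    rw [disc_eq_mspan, disc_eq_mspan]
    linarith
  have hall : ∀ m, Psi pr G (f m) ≤ Phi pr G x := by
    intro m
    have hdisc : disc pr (f m) ≤ disc pr x := by
      by_cases hacc : mspan pr (fun i => xor (m i) (x i)) ≤ mspan pr x
      · have he : f m = fun i => xor (m i) (x i) := by
          simp only [hf]; exact if_pos hacc
        rw [he]
        exact hSfix _ hacc
      · have he : f m = x := by
          simp only [hf]; exact if_neg hacc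
        rw [he]
    exact le_trans (Psi_le_Phi pr G (f m)) (Phi_mono pr G hdisc)
  have hkey : Psi pr G (f m₀) + 1 ≤ Phi pr G x := by
    have hd2 : disc pr (f m₀) ≤ disc pr x - 2 := by rw [hfm0]; exact hd
    have h1 : Psi pr G (f m₀) ≤ ENNReal.ofReal ((disc pr x - G) / 2) := by
      refine le_trans (Psi_le_Phi pr G (f m₀)) ?_
      unfold Phi
      exact ENNReal.ofReal_le_ofReal (by linarith)
    have h2 : Phi pr G x = ENNReal.ofReal ((disc pr x - G) / 2) + 1 := by
      unfold Phi
      rw [← ENNReal.ofReal_one, ← ENNReal.ofReal_add (by linarith) (by norm_num)]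
    rw [h2]
    exact add_le_add h1 le_rfl
  have hmask : rho n ≤ maskPMF n hn m₀ := rho_le_mask hn T hT1 hT2
  have hfin : maskPMF n hn m₀ * Psi pr G (f m₀) + rho n
      ≤ maskPMF n hn m₀ * Phi pr G x := by
    calc maskPMF n hn m₀ * Psi pr G (f m₀) + rho n
        ≤ maskPMF n hn m₀ * Psi pr G (f m₀) + maskPMF n hn m₀ * 1 := by
          exact add_le_add le_rfl (by rwa [mul_one])
      _ = maskPMF n hn m₀ * (Psi pr G (f m₀) + 1) := by ring
      _ ≤ maskPMF n hn m₀ * Phi pr G x := mul_le_mul' le_rfl hkey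
  have hpt : ∀ m, maskPMF n hn m * Psi pr G (f m) + (if m = m₀ then rho n else 0)
      ≤ maskPMF n hn m * Phi pr G x := by
    intro m
    by_cases hm : m = m₀
    · subst hm
      rw [if_pos rfl]
      exact hfin
    · rw [if_neg hm, add_zero]
      exact mul_le_mul' le_rfl (hall m)
  calc (∑' m, maskPMF n hn m * Psi pr G (f m)) + rho n
      = ∑' m, (maskPMF n hn m * Psi pr G (f m) + if m = m₀ then rho n else 0) := by
        rw [ENNReal.tsum_add]
        congr 1
        exact (tsum_ite_eq m₀ (fun _ => rho n)).symm
    _ ≤ ∑' m, maskPMF n hn m * Phi pr G x := ENNReal.tsum_le_tsum hpt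
    _ = 1 * Phi pr G x := by rw [ENNReal.tsum_mul_right, PMF.tsum_coe]
    _ = Phi pr G x := one_mul _

private lemma u_step (hn : 0 < n) (G : ℕ) (hG : 1 ≤ G) (p : Fin n → ℕ)
    (hp1 : ∀ i, 1 ≤ p i) (hpn : ∀ i, p i ≤ n)
    (hw : ∀ a : ℕ, 1 ≤ a → a + G ≤ n + 1 → ∃ j, a ≤ p j ∧ p j ≤ a + G - 1)
    (μ : PMF (List (Cfg n)))
    (hsupp : ∀ h ∈ μ.support, ∃ x l, h = (x, fun i => (p i : ℝ)) :: l) :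
    (∑' h', (μ.bind fun h => (eaStep hn (fun i => (p i : ℝ)) h.headI.1).map
        fun x' => (x', fun i => (p i : ℝ)) :: h) h' * Wgt (fun i => (p i : ℝ)) G h')
      + rho n * (∑' h, μ h * chi G h)
    ≤ ∑' h, μ h * Wgt (fun i => (p i : ℝ)) G h := by
  classical
  set pr : Fin n → ℝ := fun i => (p i : ℝ) with hpr
  rw [E_bind]
  have hinner : ∀ h : List (Cfg n),
      (∑' h', ((eaStep hn pr h.headI.1).map (fun x' => (x', pr) :: h)) h' * Wgt pr G h')
        = chi G h * ∑' z, eaStep hn pr h.headI.1 z * Psi pr G z := by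
    intro h
    rw [E_map, ← ENNReal.tsum_mul_left]
    refine tsum_congr fun z => ?_
    rw [Wgt_cons]
    ring
  rw [← ENNReal.tsum_mul_left, ← ENNReal.tsum_add]
  refine ENNReal.tsum_le_tsum fun h => ?_
  rw [hinner h]
  by_cases hμ : μ h = 0
  · simp [hμ]
  · obtain ⟨x, l, rfl⟩ := hsupp h ((PMF.mem_support_iff μ _).mpr hμ)
    by_cases hallb : ∀ c ∈ ((x, pr) :: l : List (Cfg n)), ¬ disc c.2 c.1 ≤ (G : ℝ)
    · have hchi : chi G ((x, pr) :: l) = 1 := if_pos hallb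
      have hbadx : ¬ disc pr x ≤ (G : ℝ) := hallb (x, pr) List.mem_cons_self
      have hdrift := step_drift hn G hG p hp1 hpn hw x hbadx
      have hW : Wgt pr G ((x, pr) :: l) = Phi pr G x := by
        unfold Wgt
        rw [hchi, one_mul]
        simp only [List.headI_cons]
      rw [hchi, hW]
      calc μ ((x, pr) :: l)
            * (1 * ∑' z, eaStep hn pr (((x, pr) :: l).headI.1) z * Psi pr G z)
            + rho n * (μ ((x, pr) :: l) * 1)
          = μ ((x, pr) :: l)
            * ((∑' z, eaStep hn pr x z * Psi pr G z) + rho n) := by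
            simp only [List.headI_cons]
            ring
        _ ≤ μ ((x, pr) :: l) * Phi pr G x := mul_le_mul' le_rfl hdrift
    · have hchi : chi G ((x, pr) :: l) = 0 := if_neg hallb
      have hW : Wgt pr G ((x, pr) :: l) = 0 := by
        unfold Wgt
        rw [hchi, zero_mul]
      rw [hchi, hW]
      simp

private lemma run_shape (hn : 0 < n) (p : Fin n → ℕ) (x₀ : Fin n → Bool) :
    ∀ t, ∀ h ∈ (run (eaStep hn) (fun _ i => (p i : ℝ)) (x₀, fun i => (p i : ℝ)) t).support,
      ∃ x l, h = (x, fun i => (p i : ℝ)) :: l := by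
  intro t
  induction t with
  | zero =>
    intro h hh
    simp only [run, PMF.support_pure, Set.mem_singleton_iff] at hh
    exact ⟨x₀, [], hh⟩
  | succ t ih =>
    intro h hh
    simp only [run] at hh
    rw [PMF.mem_support_bind_iff] at hh
    obtain ⟨h', _, hmem⟩ := hh
    rw [PMF.mem_support_map_iff] at hmem
    obtain ⟨z, _, rfl⟩ := hmem
    exact ⟨z, h', rfl⟩

private lemma disc_le_sq (hn : 0 < n) (p : Fin n → ℕ) (hpn : ∀ i, p i ≤ n)
    (x : Fin n → Bool) : disc (fun i => (p i : ℝ)) x ≤ (n : ℝ) ^ 2 := by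
  set pr : Fin n → ℝ := fun i => (p i : ℝ) with hpr
  have h0 : (0 : ℝ) ≤ load pr x false := Finset.sum_nonneg fun i _ => by positivity
  have h1 : (0 : ℝ) ≤ load pr x true := Finset.sum_nonneg fun i _ => by positivity
  have hadd := load_add pr x
  have hsum : ∑ i, pr i ≤ (n : ℝ) ^ 2 := by
    calc ∑ i, pr i ≤ ∑ _i : Fin n, (n : ℝ) :=
        Finset.sum_le_sum fun i _ => by
          show ((p i : ℝ)) ≤ (n : ℝ)
          exact_mod_cast hpn i
      _ = (n : ℝ) * n := by
        rw [Finset.sum_const, Finset.card_univ, Fintype.card_fin, nsmul_eq_mul]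
      _ = (n : ℝ) ^ 2 := by ring
  unfold disc
  rw [abs_le]
  constructor <;> linarith

end Aux

/-- Let the processing times `p : Fin n → ℕ` be fixed integers in
`{1, …, n}` such that every set of `G` consecutive values contained in `{1, …, n}`
contains the processing time of at least one job.  Then, from any initial solution,
the expected number of iterations of the (1+1) EA until the current solution `x`
satisfies `d(x) ≤ G` is `O(n⁴)`. -/
theorem ea_gap_expected_time :
    ∃ C : ℝ, 0 < C ∧
      ∀ (n : ℕ) (hn : 0 < n) (G : ℕ), 1 ≤ G →
        ∀ p : Fin n → ℕ, (∀ i, p i ∈ Finset.Icc 1 n) →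
          (∀ a : ℕ, 1 ≤ a → a + G ≤ n + 1 → ∃ j, a ≤ p j ∧ p j ≤ a + G - 1) →
          ∀ x₀ : Fin n → Bool,
            expectedHittingTime
                (run (eaStep hn) (fun _ i => (p i : ℝ)) (x₀, fun i => (p i : ℝ)))
                (fun c => disc c.2 c.1 ≤ G) ≤
              ENNReal.ofReal (C * (n : ℝ) ^ 4) := by
  classical
  refine ⟨100, by norm_num, ?_⟩
  intro n hn G hG p hpIcc hw x₀
  have hp1 : ∀ i, 1 ≤ p i := fun i => (Finset.mem_Icc.mp (hpIcc i)).1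
  have hpn : ∀ i, p i ≤ n := fun i => (Finset.mem_Icc.mp (hpIcc i)).2
  set pr : Fin n → ℝ := fun i => (p i : ℝ) with hpr
  set μ : ℕ → PMF (List (Cfg n)) :=
    run (eaStep hn) (fun _ i => (p i : ℝ)) (x₀, fun i => (p i : ℝ)) with hμ
  set u : ℕ → ℝ≥0∞ := fun t => ∑' h, μ t h * Wgt pr G h with hu
  set Q : ℕ → ℝ≥0∞ := fun t => ∑' h, μ t h * chi G h with hQ
  have hstep : ∀ t, u (t + 1) + rho n * Q t ≤ u t := by
    intro t
    have hs := u_step hn G hG p hp1 hpn hw (μ t) (run_shape hn p x₀ t)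
    exact hs
  have cum : ∀ k, u k + ∑ t ∈ Finset.range k, rho n * Q t ≤ u 0 := by
    intro k
    induction k with
    | zero => simp
    | succ k ih =>
      rw [Finset.sum_range_succ]
      calc u (k + 1) + (∑ t ∈ Finset.range k, rho n * Q t + rho n * Q k)
          = (u (k + 1) + rho n * Q k) + ∑ t ∈ Finset.range k, rho n * Q t := by ring
        _ ≤ u k + ∑ t ∈ Finset.range k, rho n * Q t := add_le_add (hstep k) le_rfl
        _ ≤ u 0 := ih
  have hsum_le : ∑' t, rho n * Q t ≤ u 0 := by
    rw [ENNReal.tsum_eq_iSup_sum]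
    refine iSup_le fun s => ?_
    calc ∑ t ∈ s, rho n * Q t
        ≤ ∑ t ∈ Finset.range (s.sup id + 1), rho n * Q t :=
          Finset.sum_le_sum_of_subset fun t ht =>
            Finset.mem_range.mpr (Nat.lt_succ_of_le (Finset.le_sup (f := id) ht))
      _ ≤ u 0 := le_trans le_add_self (cum _)
  have hE : expectedHittingTime μ (fun c : Cfg n => disc c.2 c.1 ≤ (G : ℝ)) = ∑' t, Q t := by
    unfold expectedHittingTime
    refine tsum_congr fun t => ?_
    rw [PMF.toOuterMeasure_apply]
    refine tsum_congr fun h => ?_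
    rw [Set.indicator_apply]
    have hmem : (h ∈ {h : List (Cfg n) | ∀ c ∈ h, ¬ (fun c : Cfg n => disc c.2 c.1 ≤ (G : ℝ)) c})
        ↔ ∀ c ∈ h, ¬ disc c.2 c.1 ≤ (G : ℝ) := Iff.rfl
    by_cases hx : ∀ c ∈ h, ¬ disc c.2 c.1 ≤ (G : ℝ)
    · rw [if_pos (hmem.mpr hx)]
      have hch : chi G h = 1 := by unfold chi; exact if_pos hx
      rw [hch, mul_one]
    · rw [if_neg (fun hc => hx (hmem.mp hc))]
      have hch : chi G h = 0 := by unfold chi; exact if_neg hx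
      rw [hch, mul_zero]
  have hQE : rho n * ∑' t, Q t ≤ u 0 :=
    le_trans (le_of_eq ENNReal.tsum_mul_left.symm) hsum_le
  have hu0 : u 0 ≤ ENNReal.ofReal ((n : ℝ) ^ 2) := by
    have h0 : u 0 = Wgt pr G [(x₀, pr)] := by
      show (∑' h, μ 0 h * Wgt pr G h) = Wgt pr G [(x₀, pr)]
      have hpure : μ 0 = PMF.pure [(x₀, pr)] := rfl
      rw [tsum_eq_single ([(x₀, pr)]) ?_]
      · rw [hpure, PMF.pure_apply, if_pos rfl, one_mul]
      · intro h hh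
        rw [hpure, PMF.pure_apply, if_neg hh, zero_mul]
    rw [h0]
    have hbd : Phi pr G x₀ ≤ ENNReal.ofReal ((n : ℝ) ^ 2) := by
      unfold Phi
      refine ENNReal.ofReal_le_ofReal ?_
      have hd := disc_le_sq hn p hpn x₀
      have hG1 : (1 : ℝ) ≤ (G : ℝ) := by exact_mod_cast hG
      have hn1 : (1 : ℝ) ≤ (n : ℝ) ^ 2 := by
        have : (1 : ℝ) ≤ (n : ℝ) := by exact_mod_cast hn
        nlinarith
      linarith
    calc Wgt pr G [(x₀, pr)] = chi G [(x₀, pr)] * Phi pr G x₀ := rfl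
      _ ≤ 1 * Phi pr G x₀ := mul_le_mul' (chi_le_one G _) le_rfl
      _ = Phi pr G x₀ := one_mul _
      _ ≤ ENNReal.ofReal ((n : ℝ) ^ 2) := hbd
  have hrhoinv : (rho n)⁻¹ ≤ 4 * (n : ℝ≥0∞) ^ 2 := by
    have h := rho_lower hn
    calc (rho n)⁻¹ ≤ ((4 * (n : ℝ≥0∞) ^ 2)⁻¹)⁻¹ := ENNReal.inv_le_inv.mpr h
      _ = 4 * (n : ℝ≥0∞) ^ 2 := inv_inv _
  have hfin : expectedHittingTime μ (fun c : Cfg n => disc c.2 c.1 ≤ (G : ℝ))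
      ≤ ENNReal.ofReal ((n : ℝ) ^ 2) * (4 * (n : ℝ≥0∞) ^ 2) := by
    rw [hE]
    have h1 : (∑' t, Q t) = (rho n)⁻¹ * (rho n * ∑' t, Q t) := by
      rw [← mul_assoc, ENNReal.inv_mul_cancel (rho_ne_zero hn) (rho_ne_top hn), one_mul]
    rw [h1]
    calc (rho n)⁻¹ * (rho n * ∑' t, Q t)
        ≤ (rho n)⁻¹ * u 0 := mul_le_mul' le_rfl hQE
      _ ≤ (4 * (n : ℝ≥0∞) ^ 2) * ENNReal.ofReal ((n : ℝ) ^ 2) := mul_le_mul' hrhoinv hu0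
      _ = ENNReal.ofReal ((n : ℝ) ^ 2) * (4 * (n : ℝ≥0∞) ^ 2) := mul_comm _ _
  refine le_trans hfin ?_
  have hc : (4 : ℝ≥0∞) * (n : ℝ≥0∞) ^ 2 = ENNReal.ofReal (4 * (n : ℝ) ^ 2) := by
    rw [ENNReal.ofReal_mul (by norm_num), ENNReal.ofReal_pow (by positivity),
      ENNReal.ofReal_natCast, ENNReal.ofReal_ofNat]
  rw [hc, ← ENNReal.ofReal_mul (by positivity)]
  refine ENNReal.ofReal_le_ofReal ?_
  have hn1 : (1 : ℝ) ≤ (n : ℝ) := by exact_mod_cast hn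
  nlinarith [sq_nonneg ((n : ℝ) ^ 2)]


end MakespanDyn
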